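/- Assume p_A + p_B = 1 and 1/2 < p_A < 1. For γ ∈ (0,1], let M_γ denote the transition matrix built with switching probability γ, let μ₁ be the probability vector on S with μ₁(σ,0) = 1/2 for σ ∈ {+1,−1} and 0 elsewhere, let μ_n^{(γ)} = (M_γ)^{n−1} μ₁, and let CDR_n^{(γ)} = Σ_{i=−N}^{ℓ} μ_n^{(γ)}(+1,i) + Σ_{i=−N}^{−ℓ−1} μ_n^{(γ)}(−1,i). Then for any two values γ, γ' ∈ (0,1], the limits lim_{n→∞} CDR_n^{(γ)} and lim_{n→∞} CDR_n^{(γ')} both exist and are equal; that is, the limiting correct decision rate is independent of the autocorrelation coefficient λ = 1 − 2γ of the driving signal. -/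

import Mathlib

open Matrix Finset Filter Topology

/-- Threshold index set `{-N, ..., N}`. -/
abbrev Idx (N : ℕ) : Type := {i : ℤ // i ∈ Finset.Icc (-(N : ℤ)) (N : ℤ)}

/-- State space `{+1, -1} × {-N, ..., N}`; `true` encodes `+1`, `false` encodes `-1`. -/
abbrev St (N : ℕ) : Type := Bool × Idx N

/-- The upward-move probability `q(σ, i)`. -/
noncomputable def qfun (pA pB : ℝ) (ℓ : ℤ) (σ : Bool) (i : ℤ) : ℝ :=
  if σ then (if i ≤ ℓ then 1 - pA else pB) else (if i ≤ -ℓ - 1 then 1 - pA else pB)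

/-- The 2×2 signal-flip matrix `Γ` with diagonal `1 - γ` and off-diagonal `γ`. -/
noncomputable def Gam (γ : ℝ) (τ σ : Bool) : ℝ := if τ = σ then 1 - γ else γ

/-- The transition matrix `M` of the coupled chain `(s_n, θ_n)`:
`M_{(τ,j),(σ,i)} = Γ_{τ,σ} q(σ,i)` if `j = min(i+1, N)`,
`Γ_{τ,σ} (1 - q(σ,i))` if `j = max(i-1, -N)`, `0` otherwise
(coinciding contributions are added). -/
noncomputable def Mmat (N : ℕ) (pA pB γ : ℝ) (ℓ : ℤ) : Matrix (St N) (St N) ℝ :=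
  fun tj si =>
    Gam γ tj.1 si.1 *
      ((if (tj.2 : ℤ) = min ((si.2 : ℤ) + 1) (N : ℤ) then qfun pA pB ℓ si.1 si.2 else 0) +
       (if (tj.2 : ℤ) = max ((si.2 : ℤ) - 1) (-(N : ℤ)) then 1 - qfun pA pB ℓ si.1 si.2 else 0))


/-- Initial distribution: threshold at the origin, signal value uniformly random. -/
noncomputable def mu1 (N : ℕ) : St N → ℝ := fun si => if (si.2 : ℤ) = 0 then 1 / 2 else 0

/-- The correct decision rate at the `n`-th decision, `CDR_n = P(arm A is selected)`,
for the chain started from `mu1` and driven with switching probability `γ`. -/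
noncomputable def cdrSeq (N : ℕ) (pA pB γ : ℝ) (ℓ : ℤ) (n : ℕ) : ℝ :=
  (∑ i : Idx N, if (i : ℤ) ≤ ℓ then
      ((Mmat N pA pB γ ℓ) ^ (n - 1)).mulVec (mu1 N) (true, i) else 0) +
  (∑ i : Idx N, if (i : ℤ) ≤ -ℓ - 1 then
      ((Mmat N pA pB γ ℓ) ^ (n - 1)).mulVec (mu1 N) (false, i) else 0)

set_option linter.unusedSectionVars false

namespace CdrAux

variable {ι : Type*} [Fintype ι] [DecidableEq ι]

/-- Column-stochastic (nonnegative, columns sum to 1). -/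
def ColStoch (A : Matrix ι ι ℝ) : Prop :=
  (∀ j i, 0 ≤ A j i) ∧ ∀ i, ∑ j, A j i = 1

lemma colStoch_one : ColStoch (1 : Matrix ι ι ℝ) := by
  constructor
  · intro j i
    by_cases h : j = i <;> simp [Matrix.one_apply, h]
  · intro i
    simp [Matrix.one_apply, Finset.sum_ite_eq]

lemma colStoch_mul {A B : Matrix ι ι ℝ} (hA : ColStoch A) (hB : ColStoch B) :
    ColStoch (A * B) := by
  constructor
  · intro j i
    rw [Matrix.mul_apply]
    exact Finset.sum_nonneg fun m _ => mul_nonneg (hA.1 _ _) (hB.1 _ _)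
  · intro i
    calc ∑ j, (A * B) j i = ∑ j, ∑ m, A j m * B m i := by
          simp [Matrix.mul_apply]
      _ = ∑ m, ∑ j, A j m * B m i := Finset.sum_comm
      _ = ∑ m, (∑ j, A j m) * B m i := by simp [Finset.sum_mul]
      _ = ∑ m, B m i := by
          refine Finset.sum_congr rfl fun m _ => ?_
          rw [hA.2 m, one_mul]
      _ = 1 := hB.2 i

lemma colStoch_pow {A : Matrix ι ι ℝ} (hA : ColStoch A) (n : ℕ) : ColStoch (A ^ n) := by
  induction n with
  | zero => simpa using colStoch_one
  | succ n ih => rw [pow_succ]; exact colStoch_mul ih hA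

lemma sum_mulVec {A : Matrix ι ι ℝ} (hA : ColStoch A) (w : ι → ℝ) :
    ∑ j, A.mulVec w j = ∑ i, w i := by
  calc ∑ j, A.mulVec w j = ∑ j, ∑ i, A j i * w i := by
        simp [Matrix.mulVec, dotProduct]
    _ = ∑ i, (∑ j, A j i) * w i := by rw [Finset.sum_comm]; simp [Finset.sum_mul]
    _ = ∑ i, w i := by
        refine Finset.sum_congr rfl fun i _ => ?_
        rw [hA.2 i, one_mul]

lemma nonexp {A : Matrix ι ι ℝ} (hA : ColStoch A) (w : ι → ℝ) :
    ∑ j, |A.mulVec w j| ≤ ∑ i, |w i| := by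
  calc ∑ j, |A.mulVec w j| ≤ ∑ j, ∑ i, A j i * |w i| := by
        refine Finset.sum_le_sum fun j _ => ?_
        refine (Finset.abs_sum_le_sum_abs _ _).trans ?_
        refine Finset.sum_le_sum fun i _ => ?_
        rw [abs_mul, abs_of_nonneg (hA.1 j i)]
    _ = ∑ i, (∑ j, A j i) * |w i| := by rw [Finset.sum_comm]; simp [Finset.sum_mul]
    _ = ∑ i, |w i| := by
        refine Finset.sum_congr rfl fun i _ => ?_
        rw [hA.2 i, one_mul]

/-- Dobrushin-type contraction for a strictly positive column-stochastic matrix,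
on the hyperplane of sum-zero vectors. -/
lemma contract {A : Matrix ι ι ℝ} (hA : ColStoch A) {δ : ℝ} (hδ : 0 < δ)
    (hA2 : ∀ j i, δ ≤ A j i) {w : ι → ℝ} (hw : ∑ i, w i = 0) :
    ∑ j, |A.mulVec w j| ≤ (1 - (Fintype.card ι : ℝ) * δ) * ∑ i, |w i| := by
  set wp : ι → ℝ := fun i => max (w i) 0 with hwp
  set wm : ι → ℝ := fun i => max (-w i) 0 with hwm
  have hwp0 : ∀ i, 0 ≤ wp i := fun i => le_max_right _ _
  have hwm0 : ∀ i, 0 ≤ wm i := fun i => le_max_right _ _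
  have hsub : ∀ i, w i = wp i - wm i := by
    intro i; rcases le_total 0 (w i) with h | h
    · simp [hwp, hwm, max_eq_left h, max_eq_right (by linarith : -w i ≤ 0)]
    · simp [hwp, hwm, max_eq_right h, max_eq_left (by linarith : (0:ℝ) ≤ -w i)]
  have habs : ∀ i, |w i| = wp i + wm i := by
    intro i; rcases le_total 0 (w i) with h | h
    · rw [abs_of_nonneg h]; simp [hwp, hwm, max_eq_left h, max_eq_right (by linarith : -w i ≤ 0)]
    · rw [abs_of_nonpos h]; simp [hwp, hwm, max_eq_right h, max_eq_left (by linarith : 0 ≤ -w i)]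
  set c : ℝ := ∑ i, wp i with hc
  have hceq : ∑ i, wm i = c := by
    have h1 : ∑ i, (wp i - wm i) = 0 := by
      rw [← hw]; exact Finset.sum_congr rfl fun i _ => (hsub i).symm
    rw [Finset.sum_sub_distrib] at h1
    linarith
  have hc0 : 0 ≤ c := Finset.sum_nonneg fun i _ => hwp0 i
  have hSabs : ∑ i, |w i| = 2 * c := by
    calc ∑ i, |w i| = ∑ i, (wp i + wm i) := Finset.sum_congr rfl fun i _ => habs i
      _ = c + c := by rw [Finset.sum_add_distrib, hceq]
      _ = 2 * c := by ring
  have hlowp : ∀ j, δ * c ≤ A.mulVec wp j := by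
    intro j
    calc δ * c = ∑ i, δ * wp i := by rw [← Finset.mul_sum]
      _ ≤ ∑ i, A j i * wp i :=
        Finset.sum_le_sum fun i _ => mul_le_mul_of_nonneg_right (hA2 j i) (hwp0 i)
      _ = A.mulVec wp j := rfl
  have hlowm : ∀ j, δ * c ≤ A.mulVec wm j := by
    intro j
    calc δ * c = ∑ i, δ * wm i := by rw [← Finset.mul_sum, hceq]
      _ ≤ ∑ i, A j i * wm i :=
        Finset.sum_le_sum fun i _ => mul_le_mul_of_nonneg_right (hA2 j i) (hwm0 i)
      _ = A.mulVec wm j := rfl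
  have hwfun : w = wp - wm := funext fun i => by rw [hsub i]; rfl
  have hsplit : ∀ j, A.mulVec w j = A.mulVec wp j - A.mulVec wm j := by
    intro j; rw [hwfun, Matrix.mulVec_sub]; rfl
  have hbound : ∀ j, |A.mulVec w j| ≤ (A.mulVec wp j - δ * c) + (A.mulVec wm j - δ * c) := by
    intro j
    rw [hsplit j, abs_le]
    constructor
    · have := hlowp j; linarith
    · have := hlowm j; linarith
  calc ∑ j, |A.mulVec w j|
      ≤ ∑ j, ((A.mulVec wp j - δ * c) + (A.mulVec wm j - δ * c)) :=
        Finset.sum_le_sum fun j _ => hbound j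
    _ = (∑ j, A.mulVec wp j) + (∑ j, A.mulVec wm j)
        - 2 * (Fintype.card ι : ℝ) * (δ * c) := by
        simp [Finset.sum_add_distrib, Finset.sum_sub_distrib, Finset.card_univ]
        ring
    _ = 2 * c - 2 * (Fintype.card ι : ℝ) * (δ * c) := by
        rw [sum_mulVec hA wp, sum_mulVec hA wm, ← hc, hceq]; ring
    _ = (1 - (Fintype.card ι : ℝ) * δ) * (2 * c) := by ring
    _ = (1 - (Fintype.card ι : ℝ) * δ) * ∑ i, |w i| := by rw [hSabs]


/-! ### The marginal walk matrix -/

noncomputable def Wmat (N : ℕ) (pB : ℝ) : Matrix (Idx N) (Idx N) ℝ :=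
  fun j i =>
    (if (j : ℤ) = min ((i : ℤ) + 1) (N : ℤ) then pB else 0) +
    (if (j : ℤ) = max ((i : ℤ) - 1) (-(N : ℤ)) then 1 - pB else 0)

lemma mem_bounds {N : ℕ} (i : Idx N) : -(N : ℤ) ≤ (i : ℤ) ∧ (i : ℤ) ≤ (N : ℤ) := by
  have := i.2
  rwa [Finset.mem_Icc] at this

lemma sum_indicator {N : ℕ} (m : ℤ) (hm : m ∈ Finset.Icc (-(N : ℤ)) (N : ℤ)) (a : ℝ) :
    ∑ j : Idx N, (if (j : ℤ) = m then a else 0) = a := by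
  rw [Finset.sum_eq_single (⟨m, hm⟩ : Idx N)]
  · simp
  · intro b _ hb
    rw [if_neg]
    intro h
    exact hb (Subtype.ext h)
  · intro h
    exact absurd (Finset.mem_univ _) h

lemma Wmat_colStoch {N : ℕ} {pB : ℝ} (h0 : 0 ≤ pB) (h1 : pB ≤ 1) :
    ColStoch (Wmat N pB) := by
  constructor
  · intro j i
    have : (0:ℝ) ≤ 1 - pB := by linarith
    unfold Wmat
    positivity
  · intro i
    obtain ⟨hlo, hhi⟩ := mem_bounds i
    have hm1 : min ((i : ℤ) + 1) (N : ℤ) ∈ Finset.Icc (-(N : ℤ)) (N : ℤ) := by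
      rw [Finset.mem_Icc]; omega
    have hm2 : max ((i : ℤ) - 1) (-(N : ℤ)) ∈ Finset.Icc (-(N : ℤ)) (N : ℤ) := by
      rw [Finset.mem_Icc]; omega
    unfold Wmat
    rw [Finset.sum_add_distrib, sum_indicator _ hm1, sum_indicator _ hm2]
    ring

/-! ### Positivity of a power of `Wmat` -/

section Pos

variable {N : ℕ} {pB : ℝ}

/-- the top state `N`. -/
def top (N : ℕ) : Idx N := ⟨(N : ℤ), by rw [Finset.mem_Icc]; omega⟩

lemma Wmat_top_top (hN : 0 < N) : Wmat N pB (top N) (top N) = pB := by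
  unfold Wmat top
  rw [if_pos, if_neg] <;> simp <;> omega

lemma Wmat_up (hN : 0 < N) (i : Idx N) (hi : (i : ℤ) < (N : ℤ)) :
    Wmat N pB ⟨(i : ℤ) + 1, by have := mem_bounds i; rw [Finset.mem_Icc]; omega⟩ i = pB := by
  unfold Wmat
  have := mem_bounds i
  rw [if_pos, if_neg] <;> simp <;> omega

lemma Wmat_down (hN : 0 < N) (j : Idx N) (hj : (j : ℤ) < (N : ℤ))
    (j' : Idx N) (hj' : (j' : ℤ) = (j : ℤ) + 1) :
    Wmat N pB j j' = 1 - pB := by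
  unfold Wmat
  have h1 := mem_bounds j
  rw [if_neg (by omega), if_pos (by omega), zero_add]


lemma top_coe {N : ℕ} : ((top N : Idx N) : ℤ) = (N : ℤ) := rfl

lemma pow_up {N : ℕ} {pB : ℝ} (hN : 0 < N) (hp0 : 0 < pB) (hp1 : pB ≤ 1) :
    ∀ t : ℕ, ∀ i : Idx N, (N : ℤ) ≤ (i : ℤ) + t → 0 < ((Wmat N pB) ^ t) (top N) i := by
  intro t
  induction t with
  | zero =>
      intro i hi
      have hb := (mem_bounds i).2
      have hi2 : (i : ℤ) = (N : ℤ) := by push_cast at hi; omega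
      have hi' : i = top N := Subtype.ext hi2
      rw [hi', pow_zero, Matrix.one_apply_eq]
      norm_num
  | succ t ih =>
      intro i hi
      have hWc := Wmat_colStoch (N := N) hp0.le hp1
      have hWt := colStoch_pow hWc t
      rw [pow_succ, Matrix.mul_apply]
      by_cases hcase : (i : ℤ) = (N : ℤ)
      · refine Finset.sum_pos' (fun m _ => mul_nonneg (hWt.1 _ _) (hWc.1 _ _))
          ⟨top N, Finset.mem_univ _, ?_⟩
        have h2 : Wmat N pB (top N) i = pB := by
          have hi' : i = top N := Subtype.ext hcase
          rw [hi']; exact Wmat_top_top hN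
        rw [h2]
        refine mul_pos (ih (top N) ?_) hp0
        show (N : ℤ) ≤ (N : ℤ) + t; omega
      · have hlt : (i : ℤ) < (N : ℤ) := lt_of_le_of_ne (mem_bounds i).2 hcase
        refine Finset.sum_pos' (fun m _ => mul_nonneg (hWt.1 _ _) (hWc.1 _ _))
          ⟨⟨(i : ℤ) + 1, by have := mem_bounds i; rw [Finset.mem_Icc]; omega⟩,
            Finset.mem_univ _, ?_⟩
        rw [Wmat_up hN i hlt]
        refine mul_pos (ih _ ?_) hp0
        show (N : ℤ) ≤ ((i : ℤ) + 1) + t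
        push_cast at hi
        omega

lemma pow_down {N : ℕ} {pB : ℝ} (hN : 0 < N) (hp0 : 0 < pB) (hp1 : pB < 1) :
    ∀ t : ℕ, ∀ j : Idx N, (N : ℤ) ≤ (j : ℤ) + t → 0 < ((Wmat N pB) ^ t) j (top N) := by
  intro t
  induction t with
  | zero =>
      intro j hj
      have hb := (mem_bounds j).2
      have hj2 : (j : ℤ) = (N : ℤ) := by push_cast at hj; omega
      have hj' : j = top N := Subtype.ext hj2
      rw [hj', pow_zero, Matrix.one_apply_eq]
      norm_num
  | succ t ih =>
      intro j hj
      have hWc := Wmat_colStoch (N := N) hp0.le hp1.le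
      have hWt := colStoch_pow hWc t
      rw [pow_succ', Matrix.mul_apply]
      by_cases hcase : (j : ℤ) = (N : ℤ)
      · refine Finset.sum_pos' (fun m _ => mul_nonneg (hWc.1 _ _) (hWt.1 _ _))
          ⟨top N, Finset.mem_univ _, ?_⟩
        have hj' : j = top N := Subtype.ext hcase
        rw [hj', Wmat_top_top hN]
        refine mul_pos hp0 (ih (top N) ?_)
        show (N : ℤ) ≤ (N : ℤ) + t; omega
      · have hlt : (j : ℤ) < (N : ℤ) := lt_of_le_of_ne (mem_bounds j).2 hcase
        set j' : Idx N := ⟨(j : ℤ) + 1, by have := mem_bounds j; rw [Finset.mem_Icc]; omega⟩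
          with hj'def
        refine Finset.sum_pos' (fun m _ => mul_nonneg (hWc.1 _ _) (hWt.1 _ _))
          ⟨j', Finset.mem_univ _, ?_⟩
        rw [Wmat_down hN j hlt j' rfl]
        refine mul_pos (by linarith) (ih j' ?_)
        show (N : ℤ) ≤ ((j : ℤ) + 1) + t
        push_cast at hj
        omega

lemma pow_pos_all {N : ℕ} {pB : ℝ} (hN : 0 < N) (hp0 : 0 < pB) (hp1 : pB < 1)
    (j i : Idx N) : 0 < ((Wmat N pB) ^ (4 * N)) j i := by
  have h4 : 4 * N = 2 * N + 2 * N := by ring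
  have hWc := Wmat_colStoch (N := N) hp0.le hp1.le
  rw [h4, pow_add, Matrix.mul_apply]
  refine Finset.sum_pos'
    (fun m _ => mul_nonneg ((colStoch_pow hWc _).1 _ _) ((colStoch_pow hWc _).1 _ _))
    ⟨top N, Finset.mem_univ _, mul_pos ?_ ?_⟩
  · exact pow_down hN hp0 hp1 (2 * N) j (by have := (mem_bounds j).1; push_cast; omega)
  · exact pow_up hN hp0 hp1.le (2 * N) i (by have := (mem_bounds i).1; push_cast; omega)

/-! ### Geometric decay -/

lemma decay {A : Matrix ι ι ℝ} (hA : ColStoch A) {k : ℕ} {δ : ℝ} (hδ : 0 < δ)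
    (hk : ∀ j i, δ ≤ (A ^ k) j i)
    (hc0 : 0 ≤ 1 - (Fintype.card ι : ℝ) * δ) :
    ∀ s t : ℕ, ∀ w : ι → ℝ, k * s ≤ t → ∑ i, w i = 0 →
      ∑ j, |(A ^ t).mulVec w j| ≤ (1 - (Fintype.card ι : ℝ) * δ) ^ s * ∑ i, |w i| := by
  intro s
  induction s with
  | zero =>
      intro t w _ _
      simpa using nonexp (colStoch_pow hA t) w
  | succ s ih =>
      intro t w ht hw
      rw [Nat.mul_succ] at ht
      have hkt : k ≤ t := by omega
      have ht' : k * s ≤ t - k := by omega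
      have hteq : t = (t - k) + k := by omega
      rw [hteq, pow_add, ← Matrix.mulVec_mulVec]
      have hsum0 : ∑ i, (A ^ k).mulVec w i = 0 := by
        rw [sum_mulVec (colStoch_pow hA k) w, hw]
      calc ∑ j, |(A ^ (t - k)).mulVec ((A ^ k).mulVec w) j|
          ≤ (1 - (Fintype.card ι : ℝ) * δ) ^ s * ∑ i, |(A ^ k).mulVec w i| :=
            ih (t - k) _ ht' hsum0
        _ ≤ (1 - (Fintype.card ι : ℝ) * δ) ^ s *
            ((1 - (Fintype.card ι : ℝ) * δ) * ∑ i, |w i|) :=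
            mul_le_mul_of_nonneg_left (contract (colStoch_pow hA k) hδ hk hw)
              (pow_nonneg hc0 s)
        _ = (1 - (Fintype.card ι : ℝ) * δ) ^ (s + 1) * ∑ i, |w i| := by ring

/-! ### Factorization of the coupled chain -/

noncomputable def e0 (N : ℕ) : Idx N → ℝ := fun i => if (i : ℤ) = 0 then 1 else 0

lemma Gam_sum (γ : ℝ) (τ : Bool) : ∑ σ : Bool, Gam γ τ σ = 1 := by
  cases τ <;> simp [Gam] <;> ring

lemma qfun_const {pA pB : ℝ} (hsum : pA + pB = 1) (ℓ : ℤ) (σ : Bool) (i : ℤ) :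
    qfun pA pB ℓ σ i = pB := by
  unfold qfun; split_ifs <;> linarith

lemma Mmat_kron {N : ℕ} {pA pB γ : ℝ} {ℓ : ℤ} (hsum : pA + pB = 1) (tj si : St N) :
    Mmat N pA pB γ ℓ tj si = Gam γ tj.1 si.1 * Wmat N pB tj.2 si.2 := by
  unfold Mmat Wmat
  rw [qfun_const hsum]

lemma factor {N : ℕ} {pA pB γ : ℝ} {ℓ : ℤ} (hsum : pA + pB = 1) (n : ℕ) :
    ((Mmat N pA pB γ ℓ) ^ n).mulVec (mu1 N) =
      fun si : St N => (1 / 2) * (((Wmat N pB) ^ n).mulVec (e0 N)) si.2 := by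
  induction n with
  | zero =>
      funext si
      rw [pow_zero, pow_zero, Matrix.one_mulVec, Matrix.one_mulVec]
      unfold mu1 e0
      split_ifs <;> norm_num
  | succ n ih =>
      funext tj
      rw [pow_succ', ← Matrix.mulVec_mulVec, ih, pow_succ' (Wmat N pB), ← Matrix.mulVec_mulVec]
      set u : Idx N → ℝ := (Wmat N pB ^ n).mulVec (e0 N) with hu
      calc (Mmat N pA pB γ ℓ).mulVec (fun si : St N => (1 / 2) * u si.2) tj
          = ∑ si : St N, Mmat N pA pB γ ℓ tj si * ((1 / 2) * u si.2) := by
            simp [Matrix.mulVec, dotProduct]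
        _ = ∑ si : St N, Gam γ tj.1 si.1 * (Wmat N pB tj.2 si.2 * ((1 / 2) * u si.2)) := by
            refine Finset.sum_congr rfl fun si _ => ?_
            rw [Mmat_kron hsum]; ring
        _ = ∑ σ : Bool, ∑ i : Idx N, Gam γ tj.1 σ * (Wmat N pB tj.2 i * ((1 / 2) * u i)) :=
            Fintype.sum_prod_type _
        _ = ∑ σ : Bool, Gam γ tj.1 σ * ∑ i : Idx N, Wmat N pB tj.2 i * ((1 / 2) * u i) := by
            refine Finset.sum_congr rfl fun σ _ => ?_
            rw [Finset.mul_sum]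
        _ = ∑ i : Idx N, Wmat N pB tj.2 i * ((1 / 2) * u i) := by
            rw [← Finset.sum_mul, Gam_sum, one_mul]
        _ = (1 / 2) * ∑ i : Idx N, Wmat N pB tj.2 i * u i := by
            rw [Finset.mul_sum]
            exact Finset.sum_congr rfl fun i _ => by ring
        _ = (1 / 2) * (Wmat N pB).mulVec u tj.2 := by
            simp [Matrix.mulVec, dotProduct]

/-! ### The γ-free CDR sequence -/

noncomputable def Fseq (N : ℕ) (pB : ℝ) (ℓ : ℤ) (n : ℕ) : ℝ :=
  (∑ i : Idx N, if (i : ℤ) ≤ ℓ then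
      (1 / 2) * ((Wmat N pB ^ (n - 1)).mulVec (e0 N)) i else 0) +
  (∑ i : Idx N, if (i : ℤ) ≤ -ℓ - 1 then
      (1 / 2) * ((Wmat N pB ^ (n - 1)).mulVec (e0 N)) i else 0)

lemma cdr_eq_F {N : ℕ} {pA pB γ : ℝ} {ℓ : ℤ} (hsum : pA + pB = 1) :
    cdrSeq N pA pB γ ℓ = Fseq N pB ℓ := by
  funext n
  unfold cdrSeq Fseq
  rw [factor hsum]

lemma half_bound {N : ℕ} (R : Idx N → Prop) [DecidablePred R] (f g : Idx N → ℝ) :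
    |(∑ i : Idx N, if R i then (1 / 2) * f i else 0) -
      (∑ i : Idx N, if R i then (1 / 2) * g i else 0)|
      ≤ (1 / 2) * ∑ i : Idx N, |f i - g i| := by
  rw [← Finset.sum_sub_distrib]
  calc |∑ i : Idx N, ((if R i then (1 / 2) * f i else 0) - (if R i then (1 / 2) * g i else 0))|
      ≤ ∑ i : Idx N, |(if R i then (1 / 2) * f i else 0) - (if R i then (1 / 2) * g i else 0)| :=
        Finset.abs_sum_le_sum_abs _ _
    _ ≤ ∑ i : Idx N, (1 / 2) * |f i - g i| := by
        refine Finset.sum_le_sum fun i _ => ?_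
        split_ifs
        · rw [← mul_sub, abs_mul, abs_of_nonneg (by norm_num : (0:ℝ) ≤ 1/2)]
        · simp
    _ = (1 / 2) * ∑ i : Idx N, |f i - g i| := (Finset.mul_sum _ _ _).symm

lemma F_diff_bound {N : ℕ} {pB : ℝ} {ℓ : ℤ} (a b : ℕ) :
    |Fseq N pB ℓ a - Fseq N pB ℓ b|
      ≤ ∑ i : Idx N, |((Wmat N pB ^ (a - 1)).mulVec (e0 N)) i -
          ((Wmat N pB ^ (b - 1)).mulVec (e0 N)) i| := by
  unfold Fseq
  set f : Idx N → ℝ := (Wmat N pB ^ (a - 1)).mulVec (e0 N) with hf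
  set g : Idx N → ℝ := (Wmat N pB ^ (b - 1)).mulVec (e0 N) with hg
  set A1 := ∑ i : Idx N, if (i : ℤ) ≤ ℓ then (1 / 2) * f i else 0 with hA1
  set B1 := ∑ i : Idx N, if (i : ℤ) ≤ -ℓ - 1 then (1 / 2) * f i else 0 with hB1
  set A2 := ∑ i : Idx N, if (i : ℤ) ≤ ℓ then (1 / 2) * g i else 0 with hA2
  set B2 := ∑ i : Idx N, if (i : ℤ) ≤ -ℓ - 1 then (1 / 2) * g i else 0 with hB2
  have hE : A1 + B1 - (A2 + B2) = (A1 - A2) + (B1 - B2) := by ring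
  rw [hE]
  calc |(A1 - A2) + (B1 - B2)| ≤ |A1 - A2| + |B1 - B2| := abs_add_le _ _
    _ ≤ (1 / 2) * (∑ i : Idx N, |f i - g i|) + (1 / 2) * (∑ i : Idx N, |f i - g i|) :=
        add_le_add (half_bound _ f g) (half_bound _ f g)
    _ = ∑ i : Idx N, |f i - g i| := by ring

lemma F_cauchy {N : ℕ} {pB : ℝ} (hN : 0 < N) (hp0 : 0 < pB) (hp1 : pB < 1) (ℓ : ℤ) :
    CauchySeq (Fseq N pB ℓ) := by
  have hW : ColStoch (Wmat N pB) := Wmat_colStoch hp0.le hp1.le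
  set k : ℕ := 4 * N with hk
  have hne : (Finset.univ : Finset (Idx N × Idx N)).Nonempty :=
    ⟨(top N, top N), Finset.mem_univ _⟩
  obtain ⟨p, -, hp⟩ := Finset.exists_min_image Finset.univ
    (fun p : Idx N × Idx N => ((Wmat N pB) ^ k) p.1 p.2) hne
  set δ : ℝ := ((Wmat N pB) ^ k) p.1 p.2 with hδdef
  have hδ0 : 0 < δ := pow_pos_all hN hp0 hp1 p.1 p.2
  have hδle : ∀ j i : Idx N, δ ≤ ((Wmat N pB) ^ k) j i := fun j i =>
    hp (j, i) (Finset.mem_univ _)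
  have hcard : 0 < Fintype.card (Idx N) := Fintype.card_pos_iff.mpr ⟨top N⟩
  have hmδ : (Fintype.card (Idx N) : ℝ) * δ ≤ 1 := by
    have h1 := (colStoch_pow hW k).2 (top N)
    have h2 : ∑ _j : Idx N, δ ≤ ∑ j : Idx N, ((Wmat N pB) ^ k) j (top N) :=
      Finset.sum_le_sum fun j _ => hδle j (top N)
    rw [Finset.sum_const, Finset.card_univ, nsmul_eq_mul, h1] at h2
    exact h2
  set c : ℝ := 1 - (Fintype.card (Idx N) : ℝ) * δ with hcdef
  have hc0 : 0 ≤ c := by rw [hcdef]; linarith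
  have hc1 : c < 1 := by
    have hpos : (0:ℝ) < (Fintype.card (Idx N) : ℝ) * δ :=
      mul_pos (by exact_mod_cast hcard) hδ0
    rw [hcdef]; linarith
  have he0sum : ∑ i : Idx N, e0 N i = 1 := by
    show ∑ i : Idx N, (if (i : ℤ) = 0 then (1:ℝ) else 0) = 1
    exact sum_indicator 0 (by rw [Finset.mem_Icc]; omega) 1
  have he0abs : ∑ i : Idx N, |e0 N i| = 1 := by
    rw [← he0sum]
    refine Finset.sum_congr rfl fun i _ => abs_of_nonneg ?_
    unfold e0; positivity
  have hνsum : ∀ t : ℕ, ∑ i : Idx N, ((Wmat N pB) ^ t).mulVec (e0 N) i = 1 := fun t => by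
    rw [sum_mulVec (colStoch_pow hW t), he0sum]
  have hνabs : ∀ t : ℕ, ∑ i : Idx N, |((Wmat N pB) ^ t).mulVec (e0 N) i| ≤ 1 := fun t => by
    calc ∑ i : Idx N, |((Wmat N pB) ^ t).mulVec (e0 N) i| ≤ ∑ i : Idx N, |e0 N i| :=
          nonexp (colStoch_pow hW t) _
      _ = 1 := he0abs
  have hdist : ∀ s a b : ℕ, k * s + 1 ≤ b → b ≤ a →
      ∑ i : Idx N, |((Wmat N pB) ^ (a-1)).mulVec (e0 N) i -
        ((Wmat N pB) ^ (b-1)).mulVec (e0 N) i| ≤ c ^ s * 2 := by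
    intro s a b hb hba
    set w : Idx N → ℝ := ((Wmat N pB) ^ (a - b)).mulVec (e0 N) - e0 N with hw
    have hwsum : ∑ i, w i = 0 := by
      rw [hw]
      simp only [Pi.sub_apply]
      rw [Finset.sum_sub_distrib, hνsum, he0sum]
      ring
    have hwabs : ∑ i, |w i| ≤ 2 := by
      calc ∑ i, |w i| ≤ ∑ i, (|((Wmat N pB) ^ (a - b)).mulVec (e0 N) i| + |e0 N i|) := by
            refine Finset.sum_le_sum fun i _ => ?_
            rw [hw]; simp only [Pi.sub_apply]; exact abs_sub _ _
        _ = (∑ i, |((Wmat N pB) ^ (a - b)).mulVec (e0 N) i|) + ∑ i, |e0 N i| :=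
            Finset.sum_add_distrib
        _ ≤ 1 + 1 := by rw [he0abs]; exact add_le_add_left (hνabs _) 1
        _ = 2 := by norm_num
    have hdiffeq : ((Wmat N pB) ^ (a-1)).mulVec (e0 N) - ((Wmat N pB) ^ (b-1)).mulVec (e0 N)
        = ((Wmat N pB) ^ (b-1)).mulVec w := by
      have heq : (b - 1) + (a - b) = a - 1 := by omega
      rw [hw, Matrix.mulVec_sub]
      congr 1
      rw [Matrix.mulVec_mulVec, ← pow_add, heq]
    calc ∑ i : Idx N, |((Wmat N pB) ^ (a-1)).mulVec (e0 N) i -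
            ((Wmat N pB) ^ (b-1)).mulVec (e0 N) i|
        = ∑ j : Idx N, |((Wmat N pB) ^ (b-1)).mulVec w j| := by
          refine Finset.sum_congr rfl fun i _ => ?_
          have h := congrFun hdiffeq i
          simp only [Pi.sub_apply] at h
          rw [h]
      _ ≤ c ^ s * ∑ i, |w i| :=
          decay hW hδ0 hδle hc0 s (b-1) w (by omega) hwsum
      _ ≤ c ^ s * 2 := mul_le_mul_of_nonneg_left hwabs (pow_nonneg hc0 s)
  rw [Metric.cauchySeq_iff']
  intro ε hε
  obtain ⟨s, hs⟩ := exists_pow_lt_of_lt_one (half_pos hε) hc1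
  refine ⟨k * s + 1, fun n hn => ?_⟩
  rw [Real.dist_eq]
  calc |Fseq N pB ℓ n - Fseq N pB ℓ (k * s + 1)|
      ≤ ∑ i : Idx N, |((Wmat N pB) ^ (n-1)).mulVec (e0 N) i -
          ((Wmat N pB) ^ ((k * s + 1)-1)).mulVec (e0 N) i| := F_diff_bound n (k * s + 1)
    _ ≤ c ^ s * 2 := hdist s n (k * s + 1) le_rfl hn
    _ < ε := by linarith

end Pos


end CdrAux

/-- Theorem: when `p_A + p_B = 1`, for any two switching probabilities `γ, γ' ∈ (0,1]`
the limiting correct decision rates exist and coincide; i.e. the limiting performance is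
independent of the autocorrelation coefficient `λ = 1 - 2γ` of the driving signal. -/
theorem cdr_limit_independent_of_gamma
    (N : ℕ) (hN : 0 < N) (x : ℝ) (hx0 : 0 < x) (hxN : x < N)
    (hxint : ∀ k : ℤ, (k : ℝ) ≠ x)
    (pA pB : ℝ) (hpAhalf : 1 / 2 < pA) (hpA1 : pA < 1) (hpB0 : 0 < pB) (hpB1 : pB < 1)
    (hsum : pA + pB = 1)
    (γ γ' : ℝ) (hγ0 : 0 < γ) (hγ1 : γ ≤ 1) (hγ'0 : 0 < γ') (hγ'1 : γ' ≤ 1) :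
    ∃ L : ℝ,
      Filter.Tendsto (cdrSeq N pA pB γ ⌊x⌋) Filter.atTop (𝓝 L) ∧
      Filter.Tendsto (cdrSeq N pA pB γ' ⌊x⌋) Filter.atTop (𝓝 L) := by
  have hcauchy : CauchySeq (CdrAux.Fseq N pB ⌊x⌋) := CdrAux.F_cauchy hN hpB0 hpB1 ⌊x⌋
  obtain ⟨L, hL⟩ := cauchySeq_tendsto_of_complete hcauchy
  refine ⟨L, ?_, ?_⟩
  · rw [CdrAux.cdr_eq_F hsum]; exact hL
  · rw [CdrAux.cdr_eq_F hsum]; exact hL
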